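/- Suppose α, β, γ ∈ F, α is built from β, and β is built from γ. If α is built simply from γ, then β is built simply from γ and α is built simply from β. -/

import Mathlib

open Filter Topology
open scoped ENNReal Classical

abbrev Word := List Bool

/-- Number of 1s (`true`) in a word. -/
def Yc (w : Word) : ℕ := w.count true
/-- Number of 0s (`false`) in a word. -/
def Zc (w : Word) : ℕ := w.count false
/-- Length of a word. -/
def lh (w : Word) : ℕ := w.length
/-- The ratio ρ_w = Y(w)/Z(w). -/
noncomputable def rho (w : Word) : ℝ := (Yc w : ℝ) / (Zc w : ℝ)
/-- The ratio ρ_w as an extended nonnegative real. -/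
noncomputable def rhoE (w : Word) : ℝ≥0∞ := (Yc w : ℝ≥0∞) / (Zc w : ℝ≥0∞)

/-- w is a finite binary word starting and ending with 0. -/
def inF (w : Word) : Prop := w.head? = some false ∧ w.getLast? = some false

/-- The word v 1^{a_1} v ⋯ v 1^{a_{q-1}} v, where a = [a_1, …, a_{q-1}]. -/
def buildW (v : Word) (a : List ℕ) : Word :=
  v ++ (a.map fun t => List.replicate t true ++ v).flatten

/-- u is built from v. -/
def BuiltFrom (u v : Word) : Prop := ∃ a : List ℕ, a ≠ [] ∧ u = buildW v a

/-- u is built simply from v. -/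
def BuiltSimplyFrom (u v : Word) : Prop :=
  ∃ a : List ℕ, a ≠ [] ∧ (∀ x ∈ a, ∀ y ∈ a, x = y) ∧ u = buildW v a

/-- The infinite word V extends the finite word w (w is a prefix of V). -/
def Extends (V : ℕ → Bool) (w : Word) : Prop :=
  ∀ (i : ℕ) (h : i < w.length), w.get ⟨i, h⟩ = V i

/-- The infinite word V is built from the finite word v. -/
def InfBuiltFrom (V : ℕ → Bool) (v : Word) : Prop :=
  ∃ a : ℕ → ℕ, ∀ n : ℕ, Extends V (buildW v (List.ofFn fun i : Fin n => a i))

/-- A generating sequence: v_0 = 0 and each v_{n+1} is built from v_n. -/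
def GenSeq (v : ℕ → Word) : Prop :=
  v 0 = [false] ∧ ∀ n, BuiltFrom (v (n + 1)) (v n)

/-- A generating sequence for the infinite word V. -/
def GenSeqFor (V : ℕ → Bool) (v : ℕ → Word) : Prop :=
  GenSeq v ∧ ∀ n, InfBuiltFrom V (v n)

/-- V is aperiodic. -/
def Aperiodic (V : ℕ → Bool) : Prop := ¬ ∃ p > 0, ∀ i, V (i + p) = V i

/-- V is a nondegenerate infinite rank one word (element of R). -/
def RankOneWord (V : ℕ → Bool) : Prop := (∃ v, GenSeqFor V v) ∧ Aperiodic V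

/-- v is an element of the canonical generating sequence of V. -/
def CanonicalElt (V : ℕ → Bool) (v : Word) : Prop :=
  InfBuiltFrom V v ∧
    ¬ ∃ u w : Word, inF u ∧ inF w ∧ lh u < lh v ∧ lh v < lh w ∧
      InfBuiltFrom V u ∧ InfBuiltFrom V w ∧
      BuiltFrom w u ∧ BuiltFrom u v ∧ BuiltSimplyFrom w u

/-- (v_n) is the canonical generating sequence of V. -/
def CanonicalGenSeq (V : ℕ → Bool) (v : ℕ → Word) : Prop :=
  GenSeqFor V v ∧ (∀ n, CanonicalElt V (v n)) ∧
    ∀ w : Word, CanonicalElt V w → ∃ n, v n = w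

/-- The canonical generating sequence of V (via choice). -/
noncomputable def canonSeq (V : ℕ → Bool) : ℕ → Word :=
  if h : ∃ v, CanonicalGenSeq V v then h.choose else fun _ => []

/-- ρ_{V,n}, the ratio of the n-th canonical generating word of V. -/
noncomputable def rhoSeq (V : ℕ → Bool) (n : ℕ) : ℝ := rho (canonSeq V n)

/-- ρ_V = lim_n ρ_{V,n} ∈ [0,∞]. -/
noncomputable def rhoV (V : ℕ → Bool) : ℝ≥0∞ := ⨆ n, rhoE (canonSeq V n)

/-- The set O(N,r). -/
def Oset (N : ℕ) (r : ℚ) : Set (ℕ → Bool) :=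
  {V | RankOneWord V ∧ ∀ m n : ℕ, N ≤ m → N ≤ n → |rhoSeq V m - rhoSeq V n| ≤ (r : ℝ)}

/-- R* = {V ∈ R : ρ_V < ∞}. -/
def Rstar : Set (ℕ → Bool) := {V | RankOneWord V ∧ rhoV V < ⊤}

/-- Lengths of common elements of the canonical generating sequences of V and W. -/
def commonLens (V W : ℕ → Bool) : Set ℕ :=
  {n | ∃ w : Word, lh w = n ∧ CanonicalElt V w ∧ CanonicalElt W w}

/-- The ultrametric d on R. -/
noncomputable def dR (V W : ℕ → Bool) : ℝ :=
  if V = W then 0 else (2 : ℝ) ^ (-((sSup (commonLens V W) : ℕ) : ℤ))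

/-- L(α,β) = (total number of spacers)/lh(α), when α is built from β;
here the total spacer count is Y(α) − q·Y(β) with q = Z(α)/Z(β). -/
noncomputable def Lfin (α β : Word) : ℝ :=
  ((Yc α : ℝ) - ((Zc α : ℝ) / (Zc β : ℝ)) * (Yc β : ℝ)) / (lh α : ℝ)

/-- The metric topology τ_d on R, generated by the d-balls. -/
def tauD : TopologicalSpace {V : ℕ → Bool // RankOneWord V} :=
  TopologicalSpace.generateFrom
    {s | ∃ (V : {V : ℕ → Bool // RankOneWord V}) (ε : ℝ), 0 < ε ∧
      s = {W : {V : ℕ → Bool // RankOneWord V} | dR V.1 W.1 < ε}}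

/-- The topology τ* on R*, generated by the d-balls together with the sets O(N,r). -/
def tauStar : TopologicalSpace ↥Rstar :=
  TopologicalSpace.generateFrom
    ({s | ∃ (V : ↥Rstar) (ε : ℝ), 0 < ε ∧ s = {W : ↥Rstar | dR V.1 W.1 < ε}} ∪
     {s | ∃ (N : ℕ) (r : ℚ), 0 < r ∧ s = {W : ↥Rstar | W.1 ∈ Oset N r}})

lemma buildW_nil (v : Word) : buildW v [] = v := by simp [buildW]

lemma buildW_cons (v : Word) (x : ℕ) (a : List ℕ) :
    buildW v (x :: a) = v ++ (List.replicate x true ++ buildW v a) := by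
  simp [buildW, List.append_assoc]

lemma buildW_append_cons (v : Word) (l₁ : List ℕ) (t : ℕ) (l₂ : List ℕ) :
    buildW v (l₁ ++ t :: l₂) = buildW v l₁ ++ (List.replicate t true ++ buildW v l₂) := by
  simp [buildW, List.map_append, List.flatten_append, List.append_assoc]

lemma buildW_head (g : Word) (a : List ℕ) :
    ∃ r, buildW (false :: g) a = false :: r :=
  ⟨g ++ (a.map fun t => List.replicate t true ++ (false :: g)).flatten, rfl⟩

lemma rep_true_cancel : ∀ (x y : ℕ) (s t : Word),
    List.replicate x true ++ false :: s = List.replicate y true ++ false :: t →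
    x = y ∧ s = t := by
  intro x
  induction x with
  | zero =>
    intro y s t h
    cases y with
    | zero => simpa using h
    | succ y => simp [List.replicate_succ] at h
  | succ x ih =>
    intro y s t h
    cases y with
    | zero => simp [List.replicate_succ] at h
    | succ y =>
      simp only [List.replicate_succ, List.cons_append, List.cons.injEq] at h
      obtain ⟨hxy, hst⟩ := ih y s t h.2
      exact ⟨by omega, hst⟩

lemma buildW_inj (g : Word) : ∀ (a a' : List ℕ),
    buildW (false :: g) a = buildW (false :: g) a' → a = a' := by
  intro a
  induction a with
  | nil =>
    intro a' h
    cases a' with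
    | nil => rfl
    | cons y as' =>
      exfalso
      obtain ⟨r, hr⟩ := buildW_head g as'
      have := congrArg List.length h
      rw [buildW_nil, buildW_cons, hr] at this
      simp at this
  | cons x as ih =>
    intro a' h
    cases a' with
    | nil =>
      exfalso
      obtain ⟨r, hr⟩ := buildW_head g as
      have := congrArg List.length h
      rw [buildW_nil, buildW_cons, hr] at this
      simp at this
    | cons y as' =>
      rw [buildW_cons, buildW_cons] at h
      have h2 := List.append_cancel_left h
      obtain ⟨r, hr⟩ := buildW_head g as
      obtain ⟨r', hr'⟩ := buildW_head g as'
      rw [hr, hr'] at h2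
      obtain ⟨hxy, hst⟩ := rep_true_cancel x y r r' h2
      have : buildW (false :: g) as = buildW (false :: g) as' := by
        rw [hr, hr', hst]
      rw [hxy, ih as' this]

/-- the interleaving c, b₁, c, b₂, c, …, b_{p-1}, c -/
def itl (c b : List ℕ) : List ℕ := c ++ (b.map fun t => t :: c).flatten

lemma buildW_comp (γ : Word) (c : List ℕ) : ∀ b : List ℕ,
    buildW (buildW γ c) b = buildW γ (itl c b) := by
  intro b
  induction b with
  | nil => simp [buildW_nil, itl]
  | cons t bs ih =>
    have hitl : itl c (t :: bs) = c ++ t :: itl c bs := by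
      simp [itl]
    rw [buildW_cons, ih, hitl, buildW_append_cons]

lemma mem_itl_left {c : List ℕ} (b : List ℕ) {x : ℕ} (hx : x ∈ c) : x ∈ itl c b := by
  simp [itl, hx]

lemma mem_itl_right (c : List ℕ) {b : List ℕ} {x : ℕ} (hx : x ∈ b) : x ∈ itl c b := by
  simp only [itl, List.mem_append, List.mem_flatten]
  right
  exact ⟨x :: c, List.mem_map_of_mem hx, List.mem_cons_self⟩

theorem stmt3 (alpha beta gamma : Word) (halpha : inF alpha) (hbeta : inF beta)
    (hgamma : inF gamma) (h1 : BuiltFrom alpha beta) (h2 : BuiltFrom beta gamma)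
    (h3 : BuiltSimplyFrom alpha gamma) :
    BuiltSimplyFrom beta gamma ∧ BuiltSimplyFrom alpha beta := by
  obtain ⟨b, hb, hab⟩ := h1
  obtain ⟨c, hc, hbc⟩ := h2
  obtain ⟨a, ha, haconst, hag⟩ := h3
  obtain ⟨g, hg⟩ : ∃ g, gamma = false :: g := by
    cases gamma with
    | nil => simp [inF] at hgamma
    | cons x xs =>
      have := hgamma.1
      simp [inF] at this
      exact ⟨xs, by rw [this]⟩
  have key : a = itl c b := by
    apply buildW_inj g
    rw [← hg, ← hag, hab, hbc, buildW_comp]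
  constructor
  · refine ⟨c, hc, ?_, hbc⟩
    intro x hx y hy
    exact haconst x (key ▸ mem_itl_left b hx) y (key ▸ mem_itl_left b hy)
  · refine ⟨b, hb, ?_, hab⟩
    intro x hx y hy
    exact haconst x (key ▸ mem_itl_right c hx) y (key ▸ mem_itl_right c hy)
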